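/- Let G be a finite simple graph with vertex set V, x ∈ V, and j ∈ V with j ≠ x. Regard Sh[v̄_{NC1}](x) as a function of the reliability vector p. (i) If the graph distance between x and j is 1 or 2, and p_i ∈ (0,1] for all i ≠ j, then p_j ↦ Sh[v̄_{NC1}](x) is strictly decreasing on [0,1]. (ii) If the graph distance between x and j is greater than 2, then Sh[v̄_{NC1}](x) does not depend on p_j. -/
import Mathlib


open Finset

attribute [local instance] Classical.propDecidable

noncomputable section

/-- `Π_{T,S}(p) = (∏_{i∈T} p i) * (∏_{i∈S\T} (1 - p i))`. -/
def prodPi {α : Type*} (p : α → ℝ) (T S : Finset α) : ℝ :=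
  (∏ i ∈ T, p i) * (∏ i ∈ S \ T, (1 - p i))

/-- Reliability extension of a TU-game. -/
def relExt {α : Type*} (p : α → ℝ) (v : Finset α → ℝ) (S : Finset α) : ℝ :=
  ∑ T ∈ S.powerset, v T * prodPi p T S

/-- The set of players preceding `x` in the ordering `σ`. -/
def precedingSet {α : Type*} [Fintype α] (σ : Fin (Fintype.card α) ≃ α) (x : α) : Finset α :=
  Finset.univ.filter fun y => σ.symm y < σ.symm x

/-- The Shapley value of player `x` in the TU-game `v`. -/
def shapley {α : Type*} [Fintype α] (v : Finset α → ℝ) (x : α) : ℝ :=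
  (1 / ((Fintype.card α).factorial : ℝ)) *
    ∑ σ : Fin (Fintype.card α) ≃ α,
      (v (insert x (precedingSet σ x)) - v (precedingSet σ x))

/-- The (open) neighborhood of `v` as a finset. -/
def nbhd {α : Type*} [Fintype α] (G : SimpleGraph α) (v : α) : Finset α :=
  Finset.univ.filter fun y => G.Adj v y

/-- `N̂(v) = {v} ∪ N(v)`. -/
def closedNbhd {α : Type*} [Fintype α] (G : SimpleGraph α) (v : α) : Finset α :=
  insert v (nbhd G v)

/-- `δ(S)`: vertices outside `S` having a neighbor in `S`. -/
def extBoundary {α : Type*} [Fintype α] (G : SimpleGraph α) (S : Finset α) : Finset α :=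
  Finset.univ.filter fun y => y ∉ S ∧ ∃ x ∈ S, G.Adj x y

/-- The network centrality game `Γ_{NC1}`: `v(S) = |S ∪ δ(S)|`. -/
def vNC1 {α : Type*} [Fintype α] (G : SimpleGraph α) (S : Finset α) : ℝ :=
  ((S ∪ extBoundary G S).card : ℝ)

set_option linter.unusedSectionVars false
section Aux

variable {α : Type*} [Fintype α]

lemma prodPi_def (p : α → ℝ) (T S : Finset α) :
    prodPi p T S = (∏ i ∈ T, p i) * (∏ i ∈ S \ T, (1 - p i)) := by
  rfl

lemma mem_closedNbhd {G : SimpleGraph α} {y w : α} :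
    y ∈ closedNbhd G w ↔ (y = w ∨ G.Adj w y) := by
  simp [closedNbhd, nbhd]

lemma sum_prodPi (p : α → ℝ) (S : Finset α) :
    ∑ T ∈ S.powerset, prodPi p T S = 1 := by
  have : ∑ T ∈ S.powerset, prodPi p T S
      = ∑ T ∈ S.powerset, (∏ i ∈ T, p i) * (∏ i ∈ S \ T, (1 - p i)) :=
    Finset.sum_congr rfl fun T _ => prodPi_def p T S
  rw [this, ← Finset.prod_add]
  simp

lemma sum_prodPi_sdiff (p : α → ℝ) (S A : Finset α) :
    ∑ T ∈ (S \ A).powerset, prodPi p T S = ∏ i ∈ S ∩ A, (1 - p i) := by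
  have key : ∀ T ∈ (S \ A).powerset,
      prodPi p T S = (∏ i ∈ S ∩ A, (1 - p i)) * prodPi p T (S \ A) := by
    intro T hT
    rw [Finset.mem_powerset] at hT
    rw [prodPi_def, prodPi_def]
    have hST : S \ T = (S ∩ A) ∪ ((S \ A) \ T) := by
      ext i
      simp only [Finset.mem_sdiff, Finset.mem_union, Finset.mem_inter]
      constructor
      · rintro ⟨hiS, hiT⟩
        by_cases hA : i ∈ A
        · exact Or.inl ⟨hiS, hA⟩
        · exact Or.inr ⟨⟨hiS, hA⟩, hiT⟩
      · rintro (⟨hiS, hA⟩ | ⟨⟨hiS, hA⟩, hiT⟩)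
        · exact ⟨hiS, fun hiT => (Finset.mem_sdiff.mp (hT hiT)).2 hA⟩
        · exact ⟨hiS, hiT⟩
    have hdisj : Disjoint (S ∩ A) ((S \ A) \ T) :=
      Finset.disjoint_left.mpr fun i hi hi' =>
        (Finset.mem_sdiff.mp (Finset.mem_sdiff.mp hi').1).2 (Finset.mem_inter.mp hi).2
    rw [hST, Finset.prod_union hdisj]
    ring
  calc ∑ T ∈ (S \ A).powerset, prodPi p T S
      = ∑ T ∈ (S \ A).powerset, (∏ i ∈ S ∩ A, (1 - p i)) * prodPi p T (S \ A) :=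
        Finset.sum_congr rfl key
    _ = (∏ i ∈ S ∩ A, (1 - p i)) * ∑ T ∈ (S \ A).powerset, prodPi p T (S \ A) :=
        (Finset.mul_sum _ _ _).symm
    _ = ∏ i ∈ S ∩ A, (1 - p i) := by rw [sum_prodPi, mul_one]

lemma vNC1_eq (G : SimpleGraph α) (T : Finset α) :
    vNC1 G T = ∑ w : α, (if (T ∩ closedNbhd G w).Nonempty then (1:ℝ) else 0) := by
  have h1 : (∑ w : α, if (T ∩ closedNbhd G w).Nonempty then (1:ℝ) else 0)
      = ((Finset.univ.filter fun w => (T ∩ closedNbhd G w).Nonempty).card : ℝ) := by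
    rw [Finset.sum_boole]
  rw [h1]
  unfold vNC1
  norm_cast
  congr 1
  ext w
  simp only [Finset.mem_filter, Finset.mem_univ, true_and, Finset.mem_union]
  constructor
  · rintro (h | h)
    · exact ⟨w, Finset.mem_inter.mpr ⟨h, mem_closedNbhd.mpr (Or.inl rfl)⟩⟩
    · simp only [extBoundary, Finset.mem_filter, Finset.mem_univ, true_and] at h
      obtain ⟨hwT, y, hyT, hadj⟩ := h
      exact ⟨y, Finset.mem_inter.mpr ⟨hyT, mem_closedNbhd.mpr (Or.inr hadj.symm)⟩⟩
  · rintro ⟨y, hy⟩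
    rw [Finset.mem_inter] at hy
    obtain ⟨hyT, hyN⟩ := hy
    rcases mem_closedNbhd.mp hyN with rfl | hadj
    · exact Or.inl hyT
    · by_cases hwT : w ∈ T
      · exact Or.inl hwT
      · refine Or.inr ?_
        simp only [extBoundary, Finset.mem_filter, Finset.mem_univ, true_and]
        exact ⟨hwT, y, hyT, hadj.symm⟩

lemma relExt_vNC1 (G : SimpleGraph α) (p : α → ℝ) (S : Finset α) :
    relExt p (vNC1 G) S = ∑ w : α, (1 - ∏ i ∈ S ∩ closedNbhd G w, (1 - p i)) := by
  unfold relExt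
  have hv : ∀ T ∈ S.powerset, vNC1 G T * prodPi p T S
      = ∑ w : α, (if (T ∩ closedNbhd G w).Nonempty then prodPi p T S else 0) := by
    intro T _
    rw [vNC1_eq, Finset.sum_mul]
    exact Finset.sum_congr rfl fun w _ => by rw [ite_mul, one_mul, zero_mul]
  calc ∑ T ∈ S.powerset, vNC1 G T * prodPi p T S
      = ∑ T ∈ S.powerset, ∑ w : α, (if (T ∩ closedNbhd G w).Nonempty then prodPi p T S else 0) :=
        Finset.sum_congr rfl hv
    _ = ∑ w : α, ∑ T ∈ S.powerset, (if (T ∩ closedNbhd G w).Nonempty then prodPi p T S else 0) :=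
        Finset.sum_comm
    _ = ∑ w : α, (1 - ∏ i ∈ S ∩ closedNbhd G w, (1 - p i)) := by
        refine Finset.sum_congr rfl fun w _ => ?_
        rw [Finset.sum_ite, Finset.sum_const_zero, add_zero]
        have hneg : S.powerset.filter (fun T => ¬ (T ∩ closedNbhd G w).Nonempty)
            = (S \ closedNbhd G w).powerset := by
          ext T
          simp only [Finset.mem_filter, Finset.mem_powerset, Finset.not_nonempty_iff_eq_empty,
            Finset.subset_sdiff, ← Finset.disjoint_iff_inter_eq_empty]
        have hsplit := Finset.sum_filter_add_sum_filter_not S.powerset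
          (fun T => (T ∩ closedNbhd G w).Nonempty) (fun T => prodPi p T S)
        rw [hneg, sum_prodPi_sdiff] at hsplit
        have h1 := sum_prodPi p S
        linarith

end Aux

section Aux2

variable {α : Type*} [Fintype α]

lemma marginal (G : SimpleGraph α) (p : α → ℝ) {x : α} {S : Finset α} (hx : x ∉ S) :
    relExt p (vNC1 G) (insert x S) - relExt p (vNC1 G) S
      = p x * ∑ w ∈ closedNbhd G x, ∏ i ∈ S ∩ closedNbhd G w, (1 - p i) := by
  rw [relExt_vNC1, relExt_vNC1, ← Finset.sum_sub_distrib]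
  have hterm : ∀ w : α,
      ((1 - ∏ i ∈ insert x S ∩ closedNbhd G w, (1 - p i))
        - (1 - ∏ i ∈ S ∩ closedNbhd G w, (1 - p i)))
      = if w ∈ closedNbhd G x then p x * ∏ i ∈ S ∩ closedNbhd G w, (1 - p i) else 0 := by
    intro w
    have hcomm : x ∈ closedNbhd G w ↔ w ∈ closedNbhd G x := by
      rw [mem_closedNbhd, mem_closedNbhd, eq_comm, G.adj_comm]
    by_cases hw : w ∈ closedNbhd G x
    · have hx' : x ∈ closedNbhd G w := hcomm.mpr hw
      have hins : insert x S ∩ closedNbhd G w = insert x (S ∩ closedNbhd G w) :=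
        Finset.insert_inter_of_mem hx'
      have hxn : x ∉ S ∩ closedNbhd G w := fun h => hx (Finset.mem_inter.mp h).1
      rw [hins, Finset.prod_insert hxn, if_pos hw]
      ring
    · have hx' : x ∉ closedNbhd G w := fun h => hw (hcomm.mp h)
      rw [Finset.insert_inter_of_notMem hx', if_neg hw]
      ring
  calc (∑ w : α, ((1 - ∏ i ∈ insert x S ∩ closedNbhd G w, (1 - p i))
          - (1 - ∏ i ∈ S ∩ closedNbhd G w, (1 - p i))))
      = ∑ w : α, (if w ∈ closedNbhd G x then p x * ∏ i ∈ S ∩ closedNbhd G w, (1 - p i) else 0) :=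
        Finset.sum_congr rfl fun w _ => hterm w
    _ = ∑ w ∈ closedNbhd G x, p x * ∏ i ∈ S ∩ closedNbhd G w, (1 - p i) := by
        rw [Finset.sum_ite_mem, Finset.univ_inter]
    _ = p x * ∑ w ∈ closedNbhd G x, ∏ i ∈ S ∩ closedNbhd G w, (1 - p i) :=
        (Finset.mul_sum _ _ _).symm

lemma shapley_relExt (G : SimpleGraph α) (p : α → ℝ) (x : α) :
    shapley (relExt p (vNC1 G)) x
      = (1 / ((Fintype.card α).factorial : ℝ)) *
          ∑ σ : Fin (Fintype.card α) ≃ α,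
            p x * ∑ w ∈ closedNbhd G x,
              ∏ i ∈ precedingSet σ x ∩ closedNbhd G w, (1 - p i) := by
  unfold shapley
  congr 1
  refine Finset.sum_congr rfl fun σ _ => ?_
  have hx : x ∉ precedingSet σ x := by
    intro h
    have h2 := (Finset.mem_filter.mp h).2
    exact lt_irrefl _ h2
  exact marginal G p hx

lemma dist_le_two (G : SimpleGraph α) {x j w : α}
    (hw : w ∈ closedNbhd G x) (hj : j ∈ closedNbhd G w) : G.dist x j ≤ 2 := by
  rw [mem_closedNbhd] at hw hj
  rcases hw with rfl | hxw
  · rcases hj with rfl | hwj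
    · simp [SimpleGraph.dist_self]
    · have := G.dist_le (SimpleGraph.Walk.cons hwj SimpleGraph.Walk.nil)
      simpa using Nat.le_trans this (by norm_num)
  · rcases hj with rfl | hwj
    · have := G.dist_le (SimpleGraph.Walk.cons hxw SimpleGraph.Walk.nil)
      simpa using Nat.le_trans this (by norm_num)
    · have := G.dist_le (SimpleGraph.Walk.cons hxw (SimpleGraph.Walk.cons hwj SimpleGraph.Walk.nil))
      simpa using this

lemma exists_mid (G : SimpleGraph α) {x j : α} (h : G.dist x j = 1 ∨ G.dist x j = 2) :
    ∃ w, w ∈ closedNbhd G x ∧ j ∈ closedNbhd G w := by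
  rcases h with h | h
  · have hadj : G.Adj x j := SimpleGraph.dist_eq_one_iff_adj.mp h
    exact ⟨x, mem_closedNbhd.mpr (Or.inl rfl), mem_closedNbhd.mpr (Or.inr hadj)⟩
  · have hne : G.dist x j ≠ 0 := by omega
    obtain ⟨pW, hpW⟩ := SimpleGraph.exists_walk_of_dist_ne_zero hne
    rw [h] at hpW
    have h1 : G.Adj (pW.getVert 0) (pW.getVert 1) := pW.adj_getVert_succ (by omega)
    have h2 : G.Adj (pW.getVert 1) (pW.getVert 2) := pW.adj_getVert_succ (by omega)
    rw [pW.getVert_zero] at h1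
    have hgl : pW.getVert 2 = j := by
      have := pW.getVert_length
      rwa [hpW] at this
    rw [hgl] at h2
    exact ⟨pW.getVert 1, mem_closedNbhd.mpr (Or.inr h1), mem_closedNbhd.mpr (Or.inr h2)⟩

lemma exists_perm (x j : α) (hjx : j ≠ x) :
    ∃ σ : Fin (Fintype.card α) ≃ α, precedingSet σ x = {j} := by
  have hcard : 1 < Fintype.card α := Fintype.one_lt_card_iff.mpr ⟨j, x, hjx⟩
  set n := Fintype.card α with hn
  let e : Fin n ≃ α := (Fintype.equivFin α).symm
  let z0 : Fin n := ⟨0, by omega⟩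
  let z1 : Fin n := ⟨1, by omega⟩
  have hz01 : z0 ≠ z1 := by simp [z0, z1, Fin.ext_iff]
  let a : Fin n := e.symm j
  let b : Fin n := e.symm x
  have hab : a ≠ b := fun hh => hjx (by
    have := congrArg e hh
    simpa [a, b] using this)
  let c : Fin n := Equiv.swap z0 a b
  have hc : c ≠ z0 := by
    intro hh
    apply hab
    have := congrArg (Equiv.swap z0 a) hh
    simpa [c, Equiv.swap_apply_self, Equiv.swap_apply_left] using this.symm
  let σ : Fin n ≃ α := ((Equiv.swap z1 c).trans (Equiv.swap z0 a)).trans e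
  have h1 : σ z0 = j := by
    simp only [σ, Equiv.trans_apply]
    rw [Equiv.swap_apply_of_ne_of_ne hz01 (Ne.symm hc), Equiv.swap_apply_left]
    simp [a, e]
  have h2 : σ z1 = x := by
    simp only [σ, Equiv.trans_apply]
    rw [Equiv.swap_apply_left]
    have : Equiv.swap z0 a c = b := by simp [c, Equiv.swap_apply_self]
    rw [this]
    simp [b, e]
  refine ⟨σ, ?_⟩
  have hsx : σ.symm x = z1 := by rw [← h2, Equiv.symm_apply_apply]
  ext y
  simp only [precedingSet, Finset.mem_filter, Finset.mem_univ, true_and, hsx,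
    Finset.mem_singleton]
  constructor
  · intro hy
    have hv : (σ.symm y).val < 1 := hy
    have hz : σ.symm y = z0 := by
      apply Fin.ext
      simpa [z0] using Nat.lt_one_iff.mp hv
    calc y = σ (σ.symm y) := (σ.apply_symm_apply y).symm
      _ = j := by rw [hz, h1]
  · rintro rfl
    rw [← h1, Equiv.symm_apply_apply]
    show (z0 : Fin n).val < (z1 : Fin n).val
    simp [z0, z1]

lemma prod_q_mem {j : α} (p q : α → ℝ) {M : Finset α} (hj : j ∈ M)
    (hq : ∀ i, i ≠ j → q i = p i) :
    ∏ i ∈ M, (1 - q i) = (1 - q j) * ∏ i ∈ M.erase j, (1 - p i) := by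
  rw [← Finset.mul_prod_erase M _ hj]
  congr 1
  exact Finset.prod_congr rfl fun i hi => by rw [hq i (Finset.ne_of_mem_erase hi)]

lemma prod_q_notMem {j : α} (p q : α → ℝ) {M : Finset α} (hj : j ∉ M)
    (hq : ∀ i, i ≠ j → q i = p i) :
    ∏ i ∈ M, (1 - q i) = ∏ i ∈ M, (1 - p i) :=
  Finset.prod_congr rfl fun i hi =>
    by rw [hq i (fun h => hj (by rw [← h]; exact hi))]

lemma shapley_affine (G : SimpleGraph α) (p q : α → ℝ) {x j : α} (hxj : x ≠ j)
    (hq : ∀ i, i ≠ j → q i = p i) :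
    shapley (relExt q (vNC1 G)) x
      = (1 / ((Fintype.card α).factorial : ℝ)) *
          ∑ σ : Fin (Fintype.card α) ≃ α,
            p x * ∑ w ∈ closedNbhd G x,
              (if j ∈ precedingSet σ x ∩ closedNbhd G w
               then (1 - q j) * ∏ i ∈ (precedingSet σ x ∩ closedNbhd G w).erase j, (1 - p i)
               else ∏ i ∈ precedingSet σ x ∩ closedNbhd G w, (1 - p i)) := by
  rw [shapley_relExt]
  congr 1
  refine Finset.sum_congr rfl fun σ _ => ?_
  rw [hq x hxj]
  congr 1
  refine Finset.sum_congr rfl fun w _ => ?_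
  by_cases hj : j ∈ precedingSet σ x ∩ closedNbhd G w
  · rw [if_pos hj, prod_q_mem p q hj hq]
  · rw [if_neg hj, prod_q_notMem p q hj hq]

lemma mem_univ_equiv {α : Type*} [Fintype α] (σ : Fin (Fintype.card α) ≃ α) :
    σ ∈ (Finset.univ : Finset (Fin (Fintype.card α) ≃ α)) :=
  Finset.mem_univ σ

lemma special_term (G : SimpleGraph α) (p : α → ℝ) {x j : α}
    (σ₀ : Fin (Fintype.card α) ≃ α) (hσ₀ : precedingSet σ₀ x = {j})
    {w₀ : α} (hjw₀ : j ∈ closedNbhd G w₀) (u : ℝ) :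
    (if j ∈ precedingSet σ₀ x ∩ closedNbhd G w₀
     then (1 - u) * ∏ i ∈ (precedingSet σ₀ x ∩ closedNbhd G w₀).erase j, (1 - p i)
     else ∏ i ∈ precedingSet σ₀ x ∩ closedNbhd G w₀, (1 - p i)) = 1 - u := by
  have hset : precedingSet σ₀ x ∩ closedNbhd G w₀ = {j} := by
    rw [hσ₀]; exact Finset.singleton_inter_of_mem hjw₀
  rw [hset, if_pos (Finset.mem_singleton_self j), Finset.erase_singleton, Finset.prod_empty,
    mul_one]

end Aux2

theorem stmt_7 {α : Type*} [Fintype α] [DecidableEq α] (G : SimpleGraph α)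
    (x j : α) (hjx : j ≠ x)
    (p : α → ℝ) (hp : ∀ i, p i ∈ Set.Icc (0 : ℝ) 1) :
    ((G.dist x j = 1 ∨ G.dist x j = 2) → (∀ i, i ≠ j → p i ∈ Set.Ioc (0 : ℝ) 1) →
        StrictAntiOn (fun t => shapley (relExt (Function.update p j t) (vNC1 G)) x)
          (Set.Icc 0 1)) ∧
      (2 < G.dist x j → ∀ t ∈ Set.Icc (0 : ℝ) 1, ∀ s ∈ Set.Icc (0 : ℝ) 1,
        shapley (relExt (Function.update p j t) (vNC1 G)) x =
          shapley (relExt (Function.update p j s) (vNC1 G)) x) := by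
  have hq : ∀ t : ℝ, ∀ i, i ≠ j → Function.update p j t i = p i :=
    fun t i hi => Function.update_of_ne hi t p
  have hqj : ∀ t : ℝ, Function.update p j t j = t := fun t => Function.update_self j t p
  have hfac : (0:ℝ) < 1 / ((Fintype.card α).factorial : ℝ) := by positivity
  have hC : ∀ (M : Finset α), (0:ℝ) ≤ ∏ i ∈ M, (1 - p i) :=
    fun M => Finset.prod_nonneg fun i _ => by have := (hp i).2; linarith
  constructor
  · intro hdist hioc a _ b _ hab
    obtain ⟨w₀, hw₀, hjw₀⟩ := exists_mid G hdist
    obtain ⟨σ₀, hσ₀⟩ := exists_perm x j hjx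
    have hpx : 0 < p x := (hioc x hjx.symm).1
    show shapley (relExt (Function.update p j b) (vNC1 G)) x
        < shapley (relExt (Function.update p j a) (vNC1 G)) x
    rw [shapley_affine G p (Function.update p j b) hjx.symm (hq b),
        shapley_affine G p (Function.update p j a) hjx.symm (hq a), hqj, hqj]
    apply mul_lt_mul_of_pos_left _ hfac
    apply Finset.sum_lt_sum
    · intro σ _
      apply mul_le_mul_of_nonneg_left _ (hp x).1
      apply Finset.sum_le_sum
      intro w _
      split_ifs with hc
      · exact mul_le_mul_of_nonneg_right (by linarith) (hC _)
      · exact le_refl _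
    · refine ⟨σ₀, mem_univ_equiv σ₀, ?_⟩
      apply mul_lt_mul_of_pos_left _ hpx
      apply Finset.sum_lt_sum
      · intro w _
        split_ifs with hc
        · exact mul_le_mul_of_nonneg_right (by linarith) (hC _)
        · exact le_refl _
      · refine ⟨w₀, hw₀, ?_⟩
        rw [special_term G p σ₀ hσ₀ hjw₀ b, special_term G p σ₀ hσ₀ hjw₀ a]
        linarith
  · intro hdist t _ s _
    rw [shapley_affine G p (Function.update p j t) hjx.symm (hq t),
        shapley_affine G p (Function.update p j s) hjx.symm (hq s)]
    congr 1
    refine Finset.sum_congr rfl fun σ _ => ?_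
    congr 1
    refine Finset.sum_congr rfl fun w hw => ?_
    split_ifs with hc
    · simp only [Finset.mem_inter] at hc
      exact absurd (dist_le_two G hw hc.2) (by omega)
    · rfl

end
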